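/- Let G have m ≥ 1 edges and let β : E(G) → ℝ satisfy β_e > 0 for every edge e and Σ_{e ∈ E(G)} β_e = 1, with β_max = max_{e ∈ E(G)} β_e. If R_g is the geometric mean of the d-radii of the edges of G, then (1/β_max)·(Σ_{e ∈ E(G)} β_e |z_e| − ∏_{e ∈ E(G)} |z_e|^{β_e}) + m·R_g ≤ SO(G). -/

import Mathlib

open Finset Real

noncomputable def dRad {V : Type*} [Fintype V] (G : SimpleGraph V) [DecidableRel G.Adj]
    (e : Sym2 V) : ℝ :=
  Sym2.lift ⟨fun u v => Real.sqrt ((G.degree u : ℝ) ^ 2 + (G.degree v : ℝ) ^ 2),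
    fun u v => by simp [add_comm]⟩ e

noncomputable def somborIndex {V : Type*} [Fintype V] [DecidableEq V] (G : SimpleGraph V)
    [DecidableRel G.Adj] : ℝ :=
  ∑ e ∈ G.edgeFinset, dRad G e

/-- If `β` assigns positive weights summing to `1` to the edges of `G`, `β_max` is the largest
weight, and `R_g` is the geometric mean of the d-radii, then
`(1/β_max)·(∑ β_e|z_e| − ∏ |z_e|^{β_e}) + m·R_g ≤ SO(G)`. -/
theorem stmt9 {V : Type*} [Fintype V] [DecidableEq V] (G : SimpleGraph V) [DecidableRel G.Adj]
    (m : ℕ) (hm : G.edgeFinset.card = m) (h1 : 1 ≤ m)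
    (β : Sym2 V → ℝ) (hβpos : ∀ e ∈ G.edgeFinset, 0 < β e)
    (hβsum : ∑ e ∈ G.edgeFinset, β e = 1)
    (βmax : ℝ) (hub : ∀ e ∈ G.edgeFinset, β e ≤ βmax)
    (hmem : ∃ e ∈ G.edgeFinset, β e = βmax) :
    (1 / βmax) * ((∑ e ∈ G.edgeFinset, β e * dRad G e)
          - ∏ e ∈ G.edgeFinset, dRad G e ^ β e)
        + (m : ℝ) * (∏ e ∈ G.edgeFinset, dRad G e) ^ ((1 : ℝ) / m)
      ≤ somborIndex G := by
  classical
  set s := G.edgeFinset with hs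
  set x : Sym2 V → ℝ := dRad G with hxdef
  -- positivity of d-radii
  have hx : ∀ e ∈ s, 0 < x e := by
    intro e he
    induction e with
    | _ u v =>
      rw [hs, SimpleGraph.mem_edgeFinset, SimpleGraph.mem_edgeSet] at he
      have hu : 0 < G.degree u := G.degree_pos_iff_exists_adj u |>.2 ⟨v, he⟩
      have hv : 0 < G.degree v := G.degree_pos_iff_exists_adj v |>.2 ⟨u, he.symm⟩
      have h0 : (0 : ℝ) < (G.degree u : ℝ) ^ 2 + (G.degree v : ℝ) ^ 2 := by positivity
      simpa [hxdef, dRad] using Real.sqrt_pos.2 h0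
  obtain ⟨e0, he0, he0eq⟩ := hmem
  have hβmax : 0 < βmax := he0eq ▸ hβpos e0 he0
  set t : ℝ := 1 / βmax with htdef
  have ht : 0 < t := by positivity
  have hmpos : (0 : ℝ) < m := by exact_mod_cast h1
  have htm : t ≤ m := by
    have : (1 : ℝ) ≤ m * βmax := by
      calc (1 : ℝ) = ∑ e ∈ s, β e := hβsum.symm
        _ ≤ ∑ _e ∈ s, βmax := Finset.sum_le_sum hub
        _ = m * βmax := by rw [Finset.sum_const, hm]; push_cast; ring
    rw [htdef, div_le_iff₀ hβmax]
    linarith [this]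
  set P : ℝ := ∏ e ∈ s, x e ^ β e with hPdef
  have hPnn : 0 ≤ P := Finset.prod_nonneg fun e he => Real.rpow_nonneg (hx e he).le _
  -- set up the weighted AM-GM over `Option (Sym2 V)`
  set T : Finset (Option (Sym2 V)) := insert none (s.image some) with hT
  have hnone : none ∉ s.image some := by simp
  set w : Option (Sym2 V) → ℝ := fun o => o.elim (t / m) (fun e => (1 - t * β e) / m) with hw
  set z : Option (Sym2 V) → ℝ := fun o => o.elim P (fun e => x e) with hz
  have hinj : ∀ a ∈ s, ∀ b ∈ s, some a = some b → a = b := by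
    intro a _ b _ h; exact Option.some_injective _ h
  have hwnn : ∀ i ∈ T, 0 ≤ w i := by
    intro i hi
    cases i with
    | none => exact div_nonneg ht.le hmpos.le
    | some e =>
      rw [hT, Finset.mem_insert] at hi
      rcases hi with h | h
      · exact absurd h (by simp)
      · obtain ⟨e', he', he''⟩ := Finset.mem_image.1 h
        rw [Option.some_injective _ he''] at he'
        have h1 : t * β e ≤ 1 := by
          have := hub e he'
          calc t * β e ≤ t * βmax := by nlinarith
            _ = 1 := by rw [htdef, one_div, inv_mul_cancel₀ hβmax.ne']
        have : (0:ℝ) ≤ 1 - t * β e := by linarith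
        exact div_nonneg this hmpos.le
  have hwsum : ∑ i ∈ T, w i = 1 := by
    rw [hT, Finset.sum_insert hnone, Finset.sum_image hinj]
    show t / m + ∑ e ∈ s, (1 - t * β e) / m = 1
    rw [← Finset.sum_div, Finset.sum_sub_distrib, Finset.sum_const, hm, ← Finset.mul_sum, hβsum,
      nsmul_eq_mul]
    field_simp
    ring
  have hznn : ∀ i ∈ T, 0 ≤ z i := by
    intro i hi
    cases i with
    | none => exact hPnn
    | some e =>
      rw [hT, Finset.mem_insert] at hi
      rcases hi with h | h
      · exact absurd h (by simp)
      · obtain ⟨e', he', he''⟩ := Finset.mem_image.1 h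
        rw [Option.some_injective _ he''] at he'
        exact (hx e he').le
  have key := Real.geom_mean_le_arith_mean_weighted T w z hwnn hwsum hznn
  -- compute the geometric side
  have hprod : ∏ i ∈ T, z i ^ w i = (∏ e ∈ s, x e) ^ ((1:ℝ) / m) := by
    rw [hT, Finset.prod_insert hnone, Finset.prod_image hinj]
    have hP : P ^ (t / m) = ∏ e ∈ s, x e ^ (β e * (t / m)) := by
      rw [hPdef, ← Real.finset_prod_rpow s _ (fun e he => Real.rpow_nonneg (hx e he).le _)]
      refine Finset.prod_congr rfl fun e he => ?_
      exact (Real.rpow_mul (hx e he).le _ _).symm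
    show P ^ (t / m) * ∏ e ∈ s, x e ^ ((1 - t * β e) / m) = _
    rw [hP, ← Finset.prod_mul_distrib]
    rw [← Real.finset_prod_rpow s _ (fun e he => (hx e he).le)]
    refine Finset.prod_congr rfl fun e he => ?_
    rw [← Real.rpow_add (hx e he)]
    congr 1
    field_simp
    ring
  -- compute the arithmetic side
  have hsum : ∑ i ∈ T, w i * z i
      = t / m * P + ((∑ e ∈ s, x e) - t * ∑ e ∈ s, β e * x e) / m := by
    rw [hT, Finset.sum_insert hnone, Finset.sum_image hinj]
    show t / m * P + ∑ e ∈ s, (1 - t * β e) / m * x e = _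
    have h2 : ∑ e ∈ s, (1 - t * β e) / m * x e
        = ∑ e ∈ s, (x e - t * (β e * x e)) / m :=
      Finset.sum_congr rfl fun e he => by ring
    rw [h2, ← Finset.sum_div]
    congr 1
    rw [Finset.sum_sub_distrib, ← Finset.mul_sum]
  rw [hprod, hsum] at key
  have hfinal : (m : ℝ) * (∏ e ∈ s, x e) ^ ((1:ℝ)/m)
      ≤ t * P + ((∑ e ∈ s, x e) - t * ∑ e ∈ s, β e * x e) := by
    have := mul_le_mul_of_nonneg_left key hmpos.le
    calc (m : ℝ) * (∏ e ∈ s, x e) ^ ((1:ℝ)/m)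
        ≤ (m : ℝ) * (t / m * P + ((∑ e ∈ s, x e) - t * ∑ e ∈ s, β e * x e) / m) := this
      _ = t * P + ((∑ e ∈ s, x e) - t * ∑ e ∈ s, β e * x e) := by field_simp
  show t * ((∑ e ∈ s, β e * x e) - P) + (m:ℝ) * (∏ e ∈ s, x e) ^ ((1:ℝ)/m) ≤ ∑ e ∈ s, x e
  linarith [hfinal]
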